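/- arXiv:2306.06336 — 2 statements merged into one kernel-verified Lean document; each statement's English description precedes it below -/
import Mathlib

section
/- Strong duality for the finite-support moment problem: if there exists at least one primal feasible q, then the supremum of Σ_{a∈A} H(a) q(a) over all primal feasible q equals the infimum of ψ ⬝ μ̄ + φ over all dual feasible pairs (ψ, φ). This is the duality step used to replace the inner worst-case-expectation maximization by its dual feasibility constraints in the single-level reformulation. -/
open Pointwise

/-- The linear map sending a weight vector `q` to its moment vector and expected cost. -/
noncomputable def momentCostMap {A : Type*} [Fintype A] {n : ℕ}
    (g : A → Fin n → ℝ) (H : A → ℝ) : (A → ℝ) →ₗ[ℝ] ((Fin n → ℝ) × ℝ) where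
  toFun q := (fun i => ∑ a, q a * g a i, ∑ a, H a * q a)
  map_add' x y := by
    ext i
    · simp [add_mul, Finset.sum_add_distrib]
    · simp [mul_add, Finset.sum_add_distrib]
  map_smul' c x := by
    ext i
    · simp [Finset.mul_sum, mul_assoc]
    · simp [Finset.mul_sum, mul_assoc, mul_left_comm]

/-- Strong duality for the finite-support moment problem: if there exists a primal
feasible `q`, then the supremum of `Σ_a H a * q a` over primal feasible `q` equals the
infimum of `ψ ⬝ μ̄ + φ` over dual feasible pairs `(ψ, φ)`. -/
theorem strong_duality_moment_problem
    {A : Type*} [Fintype A] [Nonempty A] {n : ℕ}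
    (g : A → Fin n → ℝ) (H : A → ℝ) (μ : Fin n → ℝ)
    (hfeas : ∃ q : A → ℝ, (∀ a, 0 ≤ q a) ∧ (∑ a, q a = 1) ∧
      (∀ i, ∑ a, q a * g a i ≤ μ i)) :
    sSup {v : ℝ | ∃ q : A → ℝ, (∀ a, 0 ≤ q a) ∧ (∑ a, q a = 1) ∧
        (∀ i, ∑ a, q a * g a i ≤ μ i) ∧ v = ∑ a, H a * q a} =
    sInf {v : ℝ | ∃ (ψ : Fin n → ℝ) (φ : ℝ), (∀ i, 0 ≤ ψ i) ∧
        (∀ a, H a ≤ (∑ i, ψ i * g a i) + φ) ∧ v = (∑ i, ψ i * μ i) + φ} := by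
  classical
  obtain ⟨q₀, hq₀pos, hq₀sum, hq₀mom⟩ := hfeas
  set P := {v : ℝ | ∃ q : A → ℝ, (∀ a, 0 ≤ q a) ∧ (∑ a, q a = 1) ∧
      (∀ i, ∑ a, q a * g a i ≤ μ i) ∧ v = ∑ a, H a * q a} with hPdef
  set D := {v : ℝ | ∃ (ψ : Fin n → ℝ) (φ : ℝ), (∀ i, 0 ≤ ψ i) ∧
      (∀ a, H a ≤ (∑ i, ψ i * g a i) + φ) ∧ v = (∑ i, ψ i * μ i) + φ} with hDdef
  have hp₀ : (∑ a, H a * q₀ a) ∈ P := ⟨q₀, hq₀pos, hq₀sum, hq₀mom, rfl⟩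
  have hPne : P.Nonempty := ⟨_, hp₀⟩
  have hPbdd : BddAbove P := by
    refine ⟨∑ a, |H a|, ?_⟩
    rintro v ⟨q, hqpos, hqsum, -, rfl⟩
    calc ∑ a, H a * q a ≤ ∑ a, |H a| * 1 := by
          refine Finset.sum_le_sum fun a _ => ?_
          have h1 : q a ≤ 1 := by
            rw [← hqsum]
            exact Finset.single_le_sum (fun b _ => hqpos b) (Finset.mem_univ a)
          calc H a * q a ≤ |H a| * q a :=
                mul_le_mul_of_nonneg_right (le_abs_self _) (hqpos a)
            _ ≤ |H a| * 1 := mul_le_mul_of_nonneg_left h1 (abs_nonneg _)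
      _ = ∑ a, |H a| := by simp
  have weak : ∀ p ∈ P, ∀ d ∈ D, p ≤ d := by
    rintro p ⟨q, hqpos, hqsum, hqmom, rfl⟩ d ⟨ψ, φ, hψ, hdual, rfl⟩
    calc ∑ a, H a * q a ≤ ∑ a, ((∑ i, ψ i * g a i) + φ) * q a := by
          refine Finset.sum_le_sum fun a _ => ?_
          exact mul_le_mul_of_nonneg_right (hdual a) (hqpos a)
      _ = (∑ i, ψ i * (∑ a, q a * g a i)) + φ := by
          have h1 : ∀ a, ((∑ i, ψ i * g a i) + φ) * q a
              = (∑ i, ψ i * (q a * g a i)) + φ * q a := by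
            intro a
            rw [add_mul, Finset.sum_mul]
            congr 1
            exact Finset.sum_congr rfl fun i _ => by ring
          rw [Finset.sum_congr rfl fun a _ => h1 a, Finset.sum_add_distrib,
            ← Finset.mul_sum, hqsum, mul_one, Finset.sum_comm]
          congr 1
          exact Finset.sum_congr rfl fun i _ => by rw [Finset.mul_sum]
      _ ≤ (∑ i, ψ i * μ i) + φ := by
          gcongr with i _
          · exact hψ i
          · exact hqmom i
  set Fm := momentCostMap g H with hFm
  set K : Set ((Fin n → ℝ) × ℝ) := {p | (∀ i, 0 ≤ p.1 i) ∧ p.2 ≤ 0} with hK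
  set C : Set ((Fin n → ℝ) × ℝ) := (Fm '' stdSimplex ℝ A) + K with hC
  have hKclosed : IsClosed K := by
    have heq : K = (⋂ i, {p : (Fin n → ℝ) × ℝ | 0 ≤ p.1 i}) ∩ {p | p.2 ≤ 0} := by
      ext p; simp [hK, Set.mem_iInter]
    rw [heq]
    refine (isClosed_iInter fun i => ?_).inter (isClosed_le continuous_snd continuous_const)
    exact isClosed_le continuous_const ((continuous_apply i).comp
      (continuous_fst : Continuous (Prod.fst : (Fin n → ℝ) × ℝ → Fin n → ℝ)))
  have hKconv : Convex ℝ K := by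
    rintro p ⟨hp1, hp2⟩ r ⟨hr1, hr2⟩ a b ha hb hab
    constructor
    · intro i
      have : (a • p + b • r).1 i = a * p.1 i + b * r.1 i := by
        simp [Prod.fst_add, smul_eq_mul]
      rw [this]
      exact add_nonneg (mul_nonneg ha (hp1 i)) (mul_nonneg hb (hr1 i))
    · have : (a • p + b • r).2 = a * p.2 + b * r.2 := by
        simp [smul_eq_mul]
      rw [this]
      exact add_nonpos (mul_nonpos_of_nonneg_of_nonpos ha hp2)
        (mul_nonpos_of_nonneg_of_nonpos hb hr2)
  have hCclosed : IsClosed C :=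
    hKclosed.add_left_of_isCompact
      ((isCompact_stdSimplex ℝ A).image Fm.continuous_of_finiteDimensional)
  have hCconv : Convex ℝ C := ((convex_stdSimplex ℝ A).linear_image Fm).add hKconv
  have hmemC : ∀ (q : A → ℝ), (∀ a, 0 ≤ q a) → (∑ a, q a = 1) → ∀ (u : Fin n → ℝ) (t : ℝ),
      (∀ i, ∑ a, q a * g a i ≤ u i) → t ≤ ∑ a, H a * q a → (u, t) ∈ C := by
    intro q hq hqs u t hu ht
    have heq : ((u, t) : (Fin n → ℝ) × ℝ)
        = Fm q + ((fun i => u i - ∑ a, q a * g a i), t - ∑ a, H a * q a) := by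
      ext i
      · simp [hFm, momentCostMap]
      · simp [hFm, momentCostMap]
    rw [heq]
    exact Set.add_mem_add ⟨q, ⟨hq, hqs⟩, rfl⟩
      ⟨fun i => sub_nonneg.2 (hu i), sub_nonpos.2 ht⟩
  have hCmem : ∀ (u : Fin n → ℝ) (t : ℝ), ((u, t) : (Fin n → ℝ) × ℝ) ∈ C →
      ∃ q : A → ℝ, (∀ a, 0 ≤ q a) ∧ (∑ a, q a = 1) ∧
        (∀ i, ∑ a, q a * g a i ≤ u i) ∧ t ≤ ∑ a, H a * q a := by
    rintro u t ⟨x, ⟨q, hqΔ, rfl⟩, k, hkK, heq⟩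
    refine ⟨q, hqΔ.1, hqΔ.2, fun i => ?_, ?_⟩
    · have h1 : (∑ a, q a * g a i) + k.1 i = u i := by
        have := congrArg (fun p : (Fin n → ℝ) × ℝ => p.1 i) heq
        simpa [hFm, momentCostMap] using this
      have := hkK.1 i
      linarith
    · have h2 : (∑ a, H a * q a) + k.2 = t := by
        have := congrArg Prod.snd heq
        simpa [hFm, momentCostMap] using this
      have := hkK.2
      linarith
  have key : ∀ ε : ℝ, 0 < ε → ∃ d ∈ D, d ≤ sSup P + ε := by
    intro ε hε
    have hnot : ((μ, sSup P + ε) : (Fin n → ℝ) × ℝ) ∉ C := by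
      intro hmem
      obtain ⟨q, hq1, hq2, hq3, hq4⟩ := hCmem _ _ hmem
      have hle : (∑ a, H a * q a) ≤ sSup P := le_csSup hPbdd ⟨q, hq1, hq2, hq3, rfl⟩
      linarith
    obtain ⟨f, s, hfs, hsx⟩ := geometric_hahn_banach_closed_point hCconv hCclosed hnot
    set e : Fin n → Fin n → ℝ := fun i j => if i = j then 1 else 0 with he
    have hfdec : ∀ (u : Fin n → ℝ) (t : ℝ),
        f (u, t) = (∑ i, u i * f (e i, 0)) + t * f (0, 1) := by
      intro u t
      have h1 : ((u, t) : (Fin n → ℝ) × ℝ) = (u, 0) + (0, t) := by simp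
      have h2 : f (u, 0) = ∑ i, u i * f (e i, 0) := by
        have h3 := LinearMap.pi_apply_eq_sum_univ
          ((f : ((Fin n → ℝ) × ℝ) →ₗ[ℝ] ℝ).comp (LinearMap.inl ℝ (Fin n → ℝ) ℝ)) u
        simpa [he, smul_eq_mul] using h3
      have h4 : f (0, t) = t * f (0, 1) := by
        have h5 : ((0 : Fin n → ℝ), t) = t • (((0 : Fin n → ℝ), 1) : (Fin n → ℝ) × ℝ) := by
          simp
        rw [h5, map_smul, smul_eq_mul]
      rw [h1, map_add, h2, h4]
    have hp₀C : ((μ, ∑ a, H a * q₀ a) : (Fin n → ℝ) × ℝ) ∈ C :=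
      hmemC q₀ hq₀pos hq₀sum μ _ hq₀mom le_rfl
    have hfp₀ : f (μ, ∑ a, H a * q₀ a) < s := hfs _ hp₀C
    have hψ : ∀ i, f (e i, 0) ≤ 0 := by
      intro i
      by_contra hcon
      push_neg at hcon
      set τ := (s - f (μ, ∑ a, H a * q₀ a)) / f (e i, 0) with hτdef
      have hτ : 0 ≤ τ := div_nonneg (by linarith) hcon.le
      have hmem : ((μ + τ • e i, ∑ a, H a * q₀ a) : (Fin n → ℝ) × ℝ) ∈ C := by
        refine hmemC q₀ hq₀pos hq₀sum _ _ (fun j => ?_) le_rfl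
        have h6 : 0 ≤ τ * e i j := by
          rcases le_or_gt 0 (e i j) with h | h
          · exact mul_nonneg hτ h
          · exfalso; simp only [he] at h; split_ifs at h <;> linarith
        have := hq₀mom j
        simp only [Pi.add_apply, Pi.smul_apply, smul_eq_mul]
        linarith
      have heq2 : ((μ + τ • e i, ∑ a, H a * q₀ a) : (Fin n → ℝ) × ℝ)
          = (μ, ∑ a, H a * q₀ a) + τ • ((e i, 0) : (Fin n → ℝ) × ℝ) := by
        ext j
        · simp
        · simp
      have h7 := hfs _ hmem
      rw [heq2, map_add, map_smul, smul_eq_mul, hτdef,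
        div_mul_cancel₀ _ (ne_of_gt hcon)] at h7
      linarith
    have hlam : 0 ≤ f (0, 1) := by
      by_contra hcon
      push_neg at hcon
      set τ := (s - f (μ, ∑ a, H a * q₀ a)) / (-(f (0, 1))) with hτdef
      have hτ : 0 ≤ τ := div_nonneg (by linarith) (by linarith)
      have hmem : ((μ, (∑ a, H a * q₀ a) - τ) : (Fin n → ℝ) × ℝ) ∈ C := by
        refine hmemC q₀ hq₀pos hq₀sum _ _ hq₀mom (by linarith)
      have heq2 : ((μ, (∑ a, H a * q₀ a) - τ) : (Fin n → ℝ) × ℝ)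
          = (μ, ∑ a, H a * q₀ a) + (-τ) • (((0 : Fin n → ℝ), 1) : (Fin n → ℝ) × ℝ) := by
        ext j
        · simp
        · simp; ring
      have h7 := hfs _ hmem
      rw [heq2, map_add, map_smul, smul_eq_mul, hτdef] at h7
      have hne : f (0, 1) ≠ 0 := ne_of_lt hcon
      have h8 : (s - f (μ, ∑ a, H a * q₀ a)) / (-(f (0, 1))) * f (0, 1)
          = -(s - f (μ, ∑ a, H a * q₀ a)) := by
        rw [div_mul_eq_mul_div, mul_div_assoc, div_neg, div_self hne]
        ring
      rw [neg_mul, h8] at h7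
      linarith
    rcases eq_or_lt_of_le hlam with hl0 | hlpos
    · exfalso
      have h1 := hfp₀
      have h2 := hsx
      rw [hfdec] at h1 h2
      rw [← hl0] at h1 h2
      simp only [mul_zero, add_zero] at h1 h2
      linarith
    · set lam := f (0, 1) with hlamdef
      refine ⟨(∑ i, (-(f (e i, 0)) / lam) * μ i) + s / lam,
        ⟨fun i => -(f (e i, 0)) / lam, s / lam, fun i => ?_, fun a => ?_, rfl⟩, ?_⟩
      · exact div_nonneg (neg_nonneg.2 (hψ i)) hlpos.le
      · -- dual feasibility at a
        have hmem : ((g a, H a) : (Fin n → ℝ) × ℝ) ∈ C := by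
          refine hmemC (fun b => if b = a then 1 else 0) (fun b => by positivity)
            (by simp) _ _ (fun i => ?_) ?_
          · have : (∑ b, (if b = a then (1:ℝ) else 0) * g b i) = g a i := by
              simp [ite_mul]
            rw [this]
          · have : (∑ b, H b * (if b = a then (1:ℝ) else 0)) = H a := by
              simp [mul_ite]
            rw [this]
        have h7 := hfs _ hmem
        rw [hfdec] at h7
        have hsum : (∑ i, (-(f (e i, 0)) / lam) * g a i) + s / lam
            = ((∑ i, -(f (e i, 0)) * g a i) + s) / lam := by
          rw [add_div, Finset.sum_div]
          congr 1
          exact Finset.sum_congr rfl fun i _ => by ring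
        rw [hsum, le_div_iff₀ hlpos]
        have hneg : (∑ i, -(f (e i, 0)) * g a i) = -(∑ i, g a i * f (e i, 0)) := by
          rw [← Finset.sum_neg_distrib]
          exact Finset.sum_congr rfl fun i _ => by ring
        rw [hneg]
        linarith
      · -- value bound
        have h2 := hsx
        rw [hfdec] at h2
        have hsum : (∑ i, (-(f (e i, 0)) / lam) * μ i) + s / lam
            = ((∑ i, -(f (e i, 0)) * μ i) + s) / lam := by
          rw [add_div, Finset.sum_div]
          congr 1
          exact Finset.sum_congr rfl fun i _ => by ring
        rw [hsum, div_le_iff₀ hlpos]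
        have hneg : (∑ i, -(f (e i, 0)) * μ i) = -(∑ i, μ i * f (e i, 0)) := by
          rw [← Finset.sum_neg_distrib]
          exact Finset.sum_congr rfl fun i _ => by ring
        rw [hneg]
        nlinarith
  obtain ⟨d₁, hd₁, -⟩ := key 1 one_pos
  have hDne : D.Nonempty := ⟨d₁, hd₁⟩
  have hDbdd : BddBelow D := ⟨∑ a, H a * q₀ a, fun d hd => weak _ hp₀ d hd⟩
  apply le_antisymm
  · exact le_csInf hDne fun d hd => csSup_le hPne fun p hp => weak p hp d hd
  · refine le_of_forall_pos_le_add ?_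
    intro ε hεpos
    obtain ⟨d, hd, hdle⟩ := key ε hεpos
    exact (csInf_le hDbdd hd).trans hdle
end

section
/- Single-level reformulation of the two-stage distributionally robust problem: let A be a nonempty finite set, g : A → ℝ^n, let X be a nonempty set of first-stage decisions, c : X → ℝ a first-stage cost, μ̄ : X → ℝ^n a (decision-dependent) moment bound, and H : X × A → ℝ the second-stage cost. Assume for each x ∈ X the inner primal problem is feasible (there exists a probability vector q on A with Σ_a q(a) g(a) ≤ μ̄(x)). Then inf_{x∈X} [ c(x) + sup { Σ_{a∈A} H(x,a) q(a) : q ≥ 0, Σ_a q(a) = 1, Σ_a q(a) g(a) ≤ μ̄(x) } ] equals inf { c(x) + ψ ⬝ μ̄(x) + φ : x ∈ X, ψ ∈ ℝ^n with ψ ≥ 0, φ ∈ ℝ, and ψ ⬝ g(a) + φ ≥ H(x,a) for all a ∈ A }. -/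
open Finset Set Pointwise

/-- Weak duality for the inner moment problem. -/
lemma weak_dual_aux {A : Type*} [Fintype A] {n : ℕ} (g : A → Fin n → ℝ)
    (h : A → ℝ) (m : Fin n → ℝ) (q : A → ℝ) (hq0 : ∀ a, 0 ≤ q a)
    (hq1 : ∑ a, q a = 1) (hqg : ∀ i, ∑ a, q a * g a i ≤ m i)
    (ψ : Fin n → ℝ) (φ : ℝ) (hψ : ∀ i, 0 ≤ ψ i)
    (hd : ∀ a, h a ≤ (∑ i, ψ i * g a i) + φ) :
    ∑ a, h a * q a ≤ (∑ i, ψ i * m i) + φ := by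
  have step1 : ∑ a, h a * q a ≤ ∑ a, ((∑ i, ψ i * g a i) + φ) * q a :=
    Finset.sum_le_sum fun a _ => mul_le_mul_of_nonneg_right (hd a) (hq0 a)
  have step2 : ∑ a, ((∑ i, ψ i * g a i) + φ) * q a
      = (∑ i, ψ i * ∑ a, q a * g a i) + φ := by
    calc ∑ a, ((∑ i, ψ i * g a i) + φ) * q a
        = ∑ a, ((∑ i, ψ i * (q a * g a i)) + φ * q a) :=
          Finset.sum_congr rfl fun a _ => by
            rw [add_mul, Finset.sum_mul]
            congr 1
            exact Finset.sum_congr rfl fun i _ => by ring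
      _ = (∑ a, ∑ i, ψ i * (q a * g a i)) + ∑ a, φ * q a := Finset.sum_add_distrib
      _ = (∑ i, ∑ a, ψ i * (q a * g a i)) + φ * ∑ a, q a := by
            rw [Finset.sum_comm, ← Finset.mul_sum]
      _ = (∑ i, ψ i * ∑ a, q a * g a i) + φ := by
            rw [hq1, mul_one]
            congr 1
            exact Finset.sum_congr rfl fun i _ => by rw [Finset.mul_sum]
  have step3 : (∑ i, ψ i * ∑ a, q a * g a i) ≤ ∑ i, ψ i * m i :=
    Finset.sum_le_sum fun i _ => mul_le_mul_of_nonneg_left (hqg i) (hψ i)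
  linarith

/-- ε-approximate strong duality via hyperplane separation. -/
lemma eps_dual_aux {A : Type*} [Fintype A] [Nonempty A] {n : ℕ}
    (g : A → Fin n → ℝ) (h : A → ℝ) (m : Fin n → ℝ)
    (q0 : A → ℝ) (hq00 : ∀ a, 0 ≤ q0 a) (hq01 : ∑ a, q0 a = 1)
    (hq0g : ∀ i, ∑ a, q0 a * g a i ≤ m i)
    (p : ℝ)
    (hp : ∀ q : A → ℝ, (∀ a, 0 ≤ q a) → (∑ a, q a = 1) →
      (∀ i, ∑ a, q a * g a i ≤ m i) → ∑ a, h a * q a ≤ p)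
    {ε : ℝ} (hε : 0 < ε) :
    ∃ (ψ : Fin n → ℝ) (φ : ℝ), (∀ i, 0 ≤ ψ i) ∧
      (∀ a, h a ≤ (∑ i, ψ i * g a i) + φ) ∧ (∑ i, ψ i * m i) + φ = p + ε := by
  classical
  -- the linear map q ↦ (Gq, h·q)
  let L : (A → ℝ) →ₗ[ℝ] (Fin n → ℝ) × ℝ :=
    { toFun := fun q => (fun i => ∑ a, q a * g a i, ∑ a, h a * q a)
      map_add' := by
        intro q r
        refine Prod.ext ?_ ?_
        · funext i
          simp [add_mul, Finset.sum_add_distrib]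
        · simp [mul_add, Finset.sum_add_distrib]
      map_smul' := by
        intro t q
        refine Prod.ext ?_ ?_
        · funext i
          simp [Finset.mul_sum, smul_eq_mul]; ring_nf
        · simp [Finset.mul_sum, smul_eq_mul]
          exact Finset.sum_congr rfl fun a _ => by ring }
  let D : Set ((Fin n → ℝ) × ℝ) := L '' stdSimplex ℝ A
  let Kc : Set ((Fin n → ℝ) × ℝ) := {z | (∀ i, 0 ≤ z.1 i) ∧ z.2 ≤ 0}
  let C : Set ((Fin n → ℝ) × ℝ) := Kc + D
  have hKclosed : IsClosed Kc := by
    have : Kc = (⋂ i, {z : (Fin n → ℝ) × ℝ | 0 ≤ z.1 i}) ∩ {z | z.2 ≤ 0} := by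
      ext z; simp [Kc, Set.mem_iInter]
    rw [this]
    exact (isClosed_iInter fun i =>
      isClosed_le continuous_const (by fun_prop)).inter
      (isClosed_le continuous_snd continuous_const)
  have hKconv : Convex ℝ Kc := by
    rintro z1 ⟨hz11, hz12⟩ z2 ⟨hz21, hz22⟩ a b ha hb hab
    constructor
    · intro i
      have : (a • z1 + b • z2).1 i = a * z1.1 i + b * z2.1 i := by
        simp [Prod.fst_add, Prod.smul_fst]
      rw [this]
      exact add_nonneg (mul_nonneg ha (hz11 i)) (mul_nonneg hb (hz21 i))
    · have : (a • z1 + b • z2).2 = a * z1.2 + b * z2.2 := by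
        simp [Prod.snd_add, Prod.smul_snd]
      rw [this]
      exact add_nonpos (mul_nonpos_of_nonneg_of_nonpos ha hz12)
        (mul_nonpos_of_nonneg_of_nonpos hb hz22)
  have hDcomp : IsCompact D :=
    (isCompact_stdSimplex ℝ A).image L.continuous_of_finiteDimensional
  have hDconv : Convex ℝ D := (convex_stdSimplex ℝ A).linear_image L
  have hCclosed : IsClosed C := hKclosed.add_right_of_isCompact hDcomp
  have hCconv : Convex ℝ C := hKconv.add hDconv
  -- the point to separate
  set b : (Fin n → ℝ) × ℝ := (m, p + ε) with hbdef
  have hbnot : b ∉ C := by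
    rintro ⟨k, hk, d, ⟨q, hq, rfl⟩, hsum⟩
    have h1 : ∀ i, k.1 i + ∑ a, q a * g a i = m i := by
      intro i
      have := congrArg (fun z => z.1 i) hsum
      simpa [L, hbdef] using this
    have h2 : k.2 + ∑ a, h a * q a = p + ε := by
      have := congrArg Prod.snd hsum
      simpa [L, hbdef] using this
    have hqfeas : ∀ i, ∑ a, q a * g a i ≤ m i := by
      intro i
      have := h1 i
      have := hk.1 i
      linarith [h1 i]
    have hle : ∑ a, h a * q a ≤ p := hp q hq.1 hq.2 hqfeas
    have : p + ε ≤ p := by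
      have := hk.2
      linarith
    linarith
  obtain ⟨f, u, hfC, hub⟩ := geometric_hahn_banach_closed_point hCconv hCclosed hbnot
  -- components of f
  set ψ' : Fin n → ℝ := fun i => f (Pi.single i 1, 0) with hψ'def
  set τ : ℝ := f (0, 1) with hτdef
  have hrep : ∀ z : (Fin n → ℝ) × ℝ, f z = (∑ i, z.1 i * ψ' i) + z.2 * τ := by
    intro z
    have hz : z = (∑ i, z.1 i • ((Pi.single i 1 : Fin n → ℝ), (0:ℝ)))
        + z.2 • ((0 : Fin n → ℝ), (1:ℝ)) := by
      refine Prod.ext ?_ ?_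
      · funext j
        have : (∑ i, z.1 i • ((Pi.single i 1 : Fin n → ℝ), (0:ℝ))).1 j
            = ∑ i, z.1 i * (Pi.single i 1 : Fin n → ℝ) j := by
          rw [Prod.fst_sum]
          simp [Finset.sum_apply]
        simp only [Prod.fst_add, Pi.add_apply, this, Prod.smul_fst, Pi.smul_apply]
        rw [Finset.sum_eq_single j]
        · simp
        · intro i _ hij
          simp [Pi.single_eq_of_ne (Ne.symm hij)]
        · simp
      · simp [Prod.snd_sum]
    conv_lhs => rw [hz]
    rw [map_add, map_sum, map_smul]
    simp only [map_smul, smul_eq_mul]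
    rfl
  -- a base point in C
  have hq0mem : q0 ∈ stdSimplex ℝ A := ⟨hq00, hq01⟩
  have hz0C : L q0 ∈ C := ⟨0, ⟨fun i => le_refl 0, le_refl 0⟩, L q0, ⟨q0, hq0mem, rfl⟩, zero_add _⟩
  have hz0 : f (L q0) < u := hfC _ hz0C
  -- translates in the recession cone stay in C
  have htrans : ∀ k : (Fin n → ℝ) × ℝ, k ∈ Kc → f (k + L q0) < u := fun k hk =>
    hfC _ ⟨k, hk, L q0, ⟨q0, hq0mem, rfl⟩, rfl⟩
  have hψ'nonpos : ∀ i, ψ' i ≤ 0 := by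
    intro i
    by_contra hpos
    push_neg at hpos
    set t : ℝ := (u - f (L q0)) / ψ' i with ht
    have ht0 : 0 < t := div_pos (by linarith) hpos
    have hmem : (t • (Pi.single i 1 : Fin n → ℝ), (0:ℝ)) ∈ Kc := by
      constructor
      · intro j
        simp only [Pi.smul_apply, smul_eq_mul]
        by_cases hji : j = i
        · subst hji; simp [Pi.single_eq_same]; positivity
        · simp [Pi.single_eq_of_ne hji]
      · simp
    have := htrans _ hmem
    rw [map_add] at this
    have hfk : f ((t • (Pi.single i 1 : Fin n → ℝ), (0:ℝ)))
        = t * ψ' i := by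
      have : ((t • (Pi.single i 1 : Fin n → ℝ), (0:ℝ)))
          = t • ((Pi.single i 1 : Fin n → ℝ), (0:ℝ)) := by
        refine Prod.ext rfl ?_; simp
      rw [this, map_smul, smul_eq_mul, hψ'def]
    rw [hfk] at this
    have : t * ψ' i < u - f (L q0) := by linarith
    rw [ht, div_mul_cancel₀ _ (ne_of_gt hpos)] at this
    linarith
  have hτnonneg : 0 ≤ τ := by
    by_contra hneg
    push_neg at hneg
    set t : ℝ := (u - f (L q0)) / (-τ) with ht
    have ht0 : 0 < t := div_pos (by linarith) (by linarith)
    have hmem : ((0 : Fin n → ℝ), -t) ∈ Kc := ⟨fun i => le_refl 0, by show -t ≤ 0; linarith⟩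
    have := htrans _ hmem
    rw [map_add] at this
    have hfk : f (((0 : Fin n → ℝ), -t)) = -t * τ := by
      have : ((0 : Fin n → ℝ), -t) = (-t) • ((0 : Fin n → ℝ), (1:ℝ)) := by
        refine Prod.ext ?_ ?_ <;> simp
      rw [this, map_smul, smul_eq_mul, hτdef]
    rw [hfk] at this
    have h1 : -t * τ < u - f (L q0) := by linarith
    have h2 : -t * τ = u - f (L q0) := by
      rw [ht]
      have he : -((u - f (L q0)) / -τ) * τ = (u - f (L q0)) / -τ * -τ := by ring
      rw [he, div_mul_cancel₀ _ (by linarith : (-τ) ≠ 0)]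
    linarith
  -- every simplex point gives a strict inequality
  have hsimplex : ∀ q : A → ℝ, q ∈ stdSimplex ℝ A →
      (∑ i, (∑ a, q a * g a i) * ψ' i) + (∑ a, h a * q a) * τ < u := by
    intro q hq
    have : L q ∈ C := ⟨0, ⟨fun i => le_refl 0, le_refl 0⟩, L q, ⟨q, hq, rfl⟩, zero_add _⟩
    have := hfC _ this
    rwa [hrep] at this
  have hbval : u < (∑ i, m i * ψ' i) + (p + ε) * τ := by
    have := hub
    rwa [hrep] at this
  -- τ is strictly positive
  have hτpos : 0 < τ := by
    rcases lt_or_eq_of_le hτnonneg with hlt | heq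
    · exact hlt
    · exfalso
      have hkey := hsimplex q0 hq0mem
      rw [← heq] at hkey hbval
      simp only [mul_zero, add_zero] at hkey hbval
      have hge : (∑ i, m i * ψ' i) ≤ ∑ i, (∑ a, q0 a * g a i) * ψ' i :=
        Finset.sum_le_sum fun i _ =>
          mul_le_mul_of_nonpos_right (hq0g i) (hψ'nonpos i)
      linarith
  refine ⟨fun i => -ψ' i / τ, p + ε - ∑ i, (-ψ' i / τ) * m i, ?_, ?_, by ring⟩
  · intro i
    exact div_nonneg (neg_nonneg.mpr (hψ'nonpos i)) (le_of_lt hτpos)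
  · intro a
    -- use the Dirac measure at a
    have hδ : (Pi.single a 1 : A → ℝ) ∈ stdSimplex ℝ A := by
      constructor
      · intro b
        by_cases hba : b = a
        · subst hba; simp
        · simp [Pi.single_eq_of_ne hba]
      · rw [Finset.sum_eq_single a]
        · simp
        · intro b _ hba; simp [Pi.single_eq_of_ne hba]
        · simp
    have hkey := hsimplex _ hδ
    have e1 : ∀ i, (∑ b, (Pi.single a 1 : A → ℝ) b * g b i) = g a i := by
      intro i
      rw [Finset.sum_eq_single a]
      · simp
      · intro b _ hba; simp [Pi.single_eq_of_ne hba]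
      · simp
    have e2 : (∑ b, h b * (Pi.single a 1 : A → ℝ) b) = h a := by
      rw [Finset.sum_eq_single a]
      · simp
      · intro b _ hba; simp [Pi.single_eq_of_ne hba]
      · simp
    simp only [e1, e2] at hkey
    have hle : (∑ i, g a i * ψ' i) + h a * τ ≤ (∑ i, m i * ψ' i) + (p + ε) * τ :=
      le_of_lt (lt_trans hkey hbval)
    have e3 : ∑ i, g a i * ψ' i = -(∑ i, (-ψ' i / τ) * g a i) * τ := by
      rw [← Finset.sum_neg_distrib, Finset.sum_mul]
      refine Finset.sum_congr rfl fun i _ => ?_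
      field_simp
    have e4 : ∑ i, m i * ψ' i = -(∑ i, (-ψ' i / τ) * m i) * τ := by
      rw [← Finset.sum_neg_distrib, Finset.sum_mul]
      refine Finset.sum_congr rfl fun i _ => ?_
      field_simp
    rw [e3, e4] at hle
    set S1 := ∑ i, (-ψ' i / τ) * g a i
    set S2 := ∑ i, (-ψ' i / τ) * m i
    nlinarith [hle, hτpos]

/-- If two sets are ε-interleaved, their infima agree. -/
lemma sInf_eq_of_interleaved (S T : Set ℝ) (hS : S.Nonempty)
    (h1 : ∀ t ∈ T, ∃ s ∈ S, s ≤ t)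
    (h2 : ∀ s ∈ S, ∀ ε > 0, ∃ t ∈ T, t ≤ s + ε) :
    sInf S = sInf T := by
  obtain ⟨s0, hs0⟩ := hS
  obtain ⟨t0, ht0, _⟩ := h2 s0 hs0 1 one_pos
  by_cases hb : BddBelow S
  · obtain ⟨b, hbb⟩ := hb
    have hbT : BddBelow T := ⟨b, fun t ht => by
      obtain ⟨s, hs, hst⟩ := h1 t ht
      exact (hbb hs).trans hst⟩
    apply le_antisymm
    · apply le_csInf ⟨t0, ht0⟩
      intro t ht
      obtain ⟨s, hs, hst⟩ := h1 t ht
      exact (csInf_le ⟨b, hbb⟩ hs).trans hst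
    · apply le_csInf ⟨s0, hs0⟩
      intro s hs
      refine le_of_forall_pos_le_add fun ε hε => ?_
      obtain ⟨t, ht, hts⟩ := h2 s hs ε hε
      exact (csInf_le hbT ht).trans hts
  · have hbT : ¬BddBelow T := by
      rintro ⟨b, hbb⟩
      exact hb ⟨b - 1, fun s hs => by
        obtain ⟨t, ht, hts⟩ := h2 s hs 1 one_pos
        have := hbb ht
        linarith⟩
    rw [csInf_of_not_bddBelow hb, csInf_of_not_bddBelow hbT]

/-- Single-level reformulation of the two-stage distributionally robust problem: if the
inner primal moment problem is feasible for every first-stage decision `x`, then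
`inf_x [c x + sup of the inner worst-case expectation]` equals the infimum of
`c x + ψ ⬝ μ̄ x + φ` over all `x ∈ X`, `ψ ≥ 0`, `φ` satisfying the dual feasibility
constraints `ψ ⬝ g a + φ ≥ H x a` for all `a ∈ A`. -/
theorem single_level_reformulation
    {A : Type*} [Fintype A] [Nonempty A] {X : Type*} [Nonempty X] {n : ℕ}
    (g : A → Fin n → ℝ) (c : X → ℝ) (μ : X → Fin n → ℝ) (H : X → A → ℝ)
    (hfeas : ∀ x : X, ∃ q : A → ℝ, (∀ a, 0 ≤ q a) ∧ (∑ a, q a = 1) ∧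
      (∀ i, ∑ a, q a * g a i ≤ μ x i)) :
    sInf {v : ℝ | ∃ x : X, v = c x +
        sSup {w : ℝ | ∃ q : A → ℝ, (∀ a, 0 ≤ q a) ∧ (∑ a, q a = 1) ∧
          (∀ i, ∑ a, q a * g a i ≤ μ x i) ∧ w = ∑ a, H x a * q a}} =
    sInf {v : ℝ | ∃ (x : X) (ψ : Fin n → ℝ) (φ : ℝ), (∀ i, 0 ≤ ψ i) ∧
        (∀ a, H x a ≤ (∑ i, ψ i * g a i) + φ) ∧
        v = c x + (∑ i, ψ i * μ x i) + φ} := by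
  classical
  set W : X → Set ℝ := fun x => {w : ℝ | ∃ q : A → ℝ, (∀ a, 0 ≤ q a) ∧ (∑ a, q a = 1) ∧
    (∀ i, ∑ a, q a * g a i ≤ μ x i) ∧ w = ∑ a, H x a * q a} with hW
  have hWne : ∀ x, (W x).Nonempty := by
    intro x
    obtain ⟨q, h0, h1, hg⟩ := hfeas x
    exact ⟨∑ a, H x a * q a, q, h0, h1, hg, rfl⟩
  have hWbdd : ∀ x, BddAbove (W x) := by
    intro x
    refine ⟨∑ a, |H x a|, ?_⟩
    rintro w ⟨q, h0, h1, hg, rfl⟩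
    refine Finset.sum_le_sum fun a _ => ?_
    have hq1a : q a ≤ 1 := by
      have := Finset.single_le_sum (f := q) (fun b _ => h0 b) (Finset.mem_univ a)
      linarith [h1]
    calc H x a * q a ≤ |H x a| * q a := mul_le_mul_of_nonneg_right (le_abs_self _) (h0 a)
      _ ≤ |H x a| * 1 := mul_le_mul_of_nonneg_left hq1a (abs_nonneg _)
      _ = |H x a| := mul_one _
  apply sInf_eq_of_interleaved
  · exact ⟨_, Classical.arbitrary X, rfl⟩
  · rintro t ⟨x, ψ, φ, hψ, hd, rfl⟩
    refine ⟨c x + sSup (W x), ⟨x, rfl⟩, ?_⟩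
    have hsup : sSup (W x) ≤ (∑ i, ψ i * μ x i) + φ := by
      refine csSup_le (hWne x) ?_
      rintro w ⟨q, h0, h1, hg, rfl⟩
      exact weak_dual_aux g (H x) (μ x) q h0 h1 hg ψ φ hψ hd
    linarith
  · rintro s ⟨x, rfl⟩ ε hε
    obtain ⟨q0, h00, h01, h0g⟩ := hfeas x
    have hp : ∀ q : A → ℝ, (∀ a, 0 ≤ q a) → (∑ a, q a = 1) →
        (∀ i, ∑ a, q a * g a i ≤ μ x i) → ∑ a, H x a * q a ≤ sSup (W x) :=
      fun q a b d => le_csSup (hWbdd x) ⟨q, a, b, d, rfl⟩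
    obtain ⟨ψ, φ, hψ, hd, hval⟩ :=
      eps_dual_aux g (H x) (μ x) q0 h00 h01 h0g (sSup (W x)) hp hε
    refine ⟨c x + (∑ i, ψ i * μ x i) + φ, ⟨x, ψ, φ, hψ, hd, rfl⟩, ?_⟩
    linarith
end
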